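/- Suppose that for every m ∈ ℕ and all data {(x_i, (y_{ti})_t) : i ≤ m} ⊆ ℝ^d × ℝ^n for which the constraints Wᵀ x_i = y_i are satisfiable, the problem min{Ω(W) : Wᵀ x_i = y_i, i ∈ {1,…,m}} admits a solution of the form Ŵ = X C where X is the matrix of inputs (columns x_i) and C is some m × n matrix (i.e., every column of Ŵ is in the span of the inputs). Then Ω(W + P) ≥ Ω(W) for all W, P ∈ M_{d,n}(ℝ) with Wᵀ P = 0. -/

import Mathlib

open Matrix

theorem stmt_11 {d n : ℕ} (Ω : Matrix (Fin d) (Fin n) ℝ → ℝ)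
    (hyp : ∀ (m : ℕ) (x : Fin m → (Fin d → ℝ)) (y : Fin m → Fin n → ℝ),
      (∃ W : Matrix (Fin d) (Fin n) ℝ, ∀ (i : Fin m) (t : Fin n), Wᵀ t ⬝ᵥ x i = y i t) →
      ∃ Whatt : Matrix (Fin d) (Fin n) ℝ,
        (∀ (i : Fin m) (t : Fin n), Whattᵀ t ⬝ᵥ x i = y i t) ∧
        (∀ W : Matrix (Fin d) (Fin n) ℝ,
          (∀ (i : Fin m) (t : Fin n), Wᵀ t ⬝ᵥ x i = y i t) → Ω Whatt ≤ Ω W) ∧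
        ∃ C : Matrix (Fin m) (Fin n) ℝ, Whatt = (Matrix.of fun j i => x i j) * C) :
    ∀ W P : Matrix (Fin d) (Fin n) ℝ, Wᵀ * P = 0 → Ω W ≤ Ω (W + P) := by
  intro W P hWP
  -- data: columns of W
  obtain ⟨Whatt, hfeas, hmin, C, hC⟩ :=
    hyp n (fun i j => W j i) (fun i t => (Wᵀ * W) t i)
      ⟨W, fun i t => by simp [Matrix.mul_apply, dotProduct, transpose_apply]⟩
  -- X = W
  have hX : (Matrix.of fun j i => (fun i j => W j i) i j) = W := rfl
  rw [hX] at hC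
  -- feasibility means Whattᵀ * W = Wᵀ * W
  have h1 : Whattᵀ * W = Wᵀ * W := by
    ext t i
    have := hfeas i t
    simpa [Matrix.mul_apply, dotProduct, transpose_apply] using this
  -- hence Wᵀ W C = Wᵀ W
  have h2 : Wᵀ * W * C = Wᵀ * W := by
    have := congrArg transpose h1
    simpa [hC, transpose_mul, Matrix.mul_assoc] using this
  have h2' : Cᵀ * (Wᵀ * W) = Wᵀ * W := by
    have := congrArg transpose h2
    simpa [transpose_mul, Matrix.mul_assoc] using this
  -- show Whatt = W
  have hzero : (W * C - W)ᵀ * (W * C - W) = 0 := by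
    have expand : (W * C - W)ᵀ * (W * C - W)
        = Cᵀ * (Wᵀ * W * C) - Cᵀ * (Wᵀ * W) - Wᵀ * W * C + Wᵀ * W := by
      simp [transpose_mul, Matrix.sub_mul, Matrix.mul_sub, Matrix.mul_assoc]
      noncomm_ring
    rw [expand, h2, h2']
    simp
  have hWC : W * C = W := by
    have hcz : (W * C - W)ᴴ * (W * C - W) = 0 := by
      rw [Matrix.conjTranspose_eq_transpose_of_trivial]; exact hzero
    have := (Matrix.conjTranspose_mul_self_eq_zero).mp hcz
    exact sub_eq_zero.mp this
  have hW : Whatt = W := by rw [hC, hWC]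
  -- W + P is feasible
  have hPtW : Pᵀ * W = 0 := by
    have := congrArg transpose hWP
    simpa [transpose_mul] using this
  have hfeas2 : ∀ (i : Fin n) (t : Fin n),
      (W + P)ᵀ t ⬝ᵥ (fun i j => W j i) i = (Wᵀ * W) t i := by
    intro i t
    have : ((W + P)ᵀ * W) t i = (Wᵀ * W) t i := by
      rw [transpose_add, Matrix.add_mul, hPtW, add_zero]
    simpa [Matrix.mul_apply, dotProduct, transpose_apply] using this
  have := hmin (W + P) hfeas2
  rwa [hW] at this
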